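/- There exists a constant C > 0 such that for all real x ≥ 1, the L²(0,1)-norm of B_x satisfies ‖B_x‖₂ ≤ C/√x, where B_x(t) = (1/x)·Σ_{k ≤ x} β(kt). -/

import Mathlib

open MeasureTheory

noncomputable def beta (t : ℝ) : ℝ := t - ⌊t⌋ - 1/2

lemma beta_eq (t : ℝ) : beta t = Int.fract t - 1/2 := by
  rw [beta, Int.fract]

lemma abs_beta_le (t : ℝ) : |beta t| ≤ 1 := by
  rw [beta_eq, abs_le]
  constructor
  · have := Int.fract_nonneg t; linarith
  · have := Int.fract_lt_one t; linarith

lemma measurable_beta : Measurable beta := by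
  have : beta = fun t => Int.fract t - 1/2 := funext beta_eq
  rw [this]
  exact measurable_fract.sub measurable_const

lemma beta_add_int (t : ℝ) (n : ℤ) : beta (t + n) = beta t := by
  simp [beta_eq, Int.fract_add_intCast]

lemma beta_add_nat (t : ℝ) (n : ℕ) : beta (t + n) = beta t := by
  simpa using beta_add_int t n

lemma beta_int_mul_add (t : ℝ) {a : ℕ} (ha : 0 < a) (n m : ℤ) (h : (n:ZMod a) = m) :
    beta ((t + n) / a) = beta ((t + m) / a) := by
  haveI : NeZero a := ⟨ha.ne'⟩
  have hd : (a:ℤ) ∣ n - m := by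
    rwa [← ZMod.intCast_zmod_eq_zero_iff_dvd, Int.cast_sub, sub_eq_zero]
  obtain ⟨k, hk⟩ := hd
  have hn : (n:ℝ) = m + a * k := by
    have : (n:ℝ) - m = a * k := by exact_mod_cast congrArg (Int.cast : ℤ → ℝ) hk
    linarith
  have ha' : (a:ℝ) ≠ 0 := by positivity
  have : (t + n) / a = (t + m) / a + k := by
    field_simp [hn]; linarith [hn]
  rw [this, beta_add_int]

lemma sum_zmod (a : ℕ) [NeZero a] (G : ZMod a → ℝ) :
    ∑ j ∈ Finset.range a, G (j : ℕ) = ∑ z : ZMod a, G z := by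
  apply Finset.sum_nbij' (i := fun j => ((j : ℕ) : ZMod a)) (j := fun z => z.val)
  · intro j hj; exact Finset.mem_univ _
  · intro z hz; exact Finset.mem_range.mpr (ZMod.val_lt z)
  · intro j hj; exact ZMod.val_natCast_of_lt (Finset.mem_range.mp hj)
  · intro z hz; exact ZMod.natCast_rightInverse z
  · intro j hj; rfl

lemma sum_range_real (n : ℕ) : ∑ j ∈ Finset.range n, (j:ℝ) = n * (n - 1) / 2 := by
  induction n with
  | zero => simp
  | succ m ih => rw [Finset.sum_range_succ, ih]; push_cast; ring

lemma sum_beta_shift (a : ℕ) (ha : 0 < a) (t : ℝ) (m : ℤ) :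
    ∑ j ∈ Finset.range a, beta ((t + (m + j)) / a) = ∑ j ∈ Finset.range a, beta ((t + j) / a) := by
  haveI : NeZero a := ⟨ha.ne'⟩
  set G : ZMod a → ℝ := fun z => beta ((t + (z.val : ℕ)) / a) with hG
  have key : ∀ n : ℤ, beta ((t + n) / a) = G ((n : ZMod a)) := by
    intro n
    apply beta_int_mul_add t ha
    push_cast [ZMod.natCast_val, ZMod.intCast_zmod_cast]
    rfl
  have key' : ∀ n : ℕ, beta ((t + (n:ℝ)) / a) = G ((n : ℕ) : ZMod a) := by
    intro n
    have h := key (n : ℤ)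
    push_cast at h
    exact h
  calc ∑ j ∈ Finset.range a, beta ((t + (m + j)) / a)
      = ∑ j ∈ Finset.range a, G ((m : ZMod a) + (j:ℕ)) := by
        refine Finset.sum_congr rfl fun j _ => ?_
        rw [show (t + ((m:ℝ) + (j:ℝ))) = t + ((m + j : ℤ):ℝ) by push_cast; ring, key (m+j)]
        congr 1; push_cast; ring
    _ = ∑ z : ZMod a, G ((m : ZMod a) + z) := sum_zmod a (fun z => G ((m : ZMod a) + z))
    _ = ∑ z : ZMod a, G z := Fintype.sum_equiv (Equiv.addLeft (m : ZMod a)) _ _ (fun z => rfl)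
    _ = ∑ j ∈ Finset.range a, beta ((t + j) / a) := by
        rw [← sum_zmod a G]
        refine Finset.sum_congr rfl fun j _ => ?_
        exact (key' j).symm

lemma sum_beta_mul (a b : ℕ) (ha : 0 < a) (hco : Nat.Coprime b a) (t : ℝ) :
    ∑ j ∈ Finset.range a, beta ((t + (b * j : ℕ)) / a) = ∑ j ∈ Finset.range a, beta ((t + j) / a) := by
  haveI : NeZero a := ⟨ha.ne'⟩
  set G : ZMod a → ℝ := fun z => beta ((t + (z.val : ℕ)) / a) with hG
  have key : ∀ n : ℤ, beta ((t + n) / a) = G ((n : ZMod a)) := by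
    intro n
    apply beta_int_mul_add t ha
    push_cast [ZMod.natCast_val, ZMod.intCast_zmod_cast]
    rfl
  have key' : ∀ n : ℕ, beta ((t + (n:ℝ)) / a) = G ((n : ℕ) : ZMod a) := by
    intro n
    have h := key (n : ℤ)
    push_cast at h
    exact h
  obtain ⟨u, hu⟩ := (ZMod.isUnit_iff_coprime b a).mpr hco
  calc ∑ j ∈ Finset.range a, beta ((t + (b*j:ℕ)) / a)
      = ∑ j ∈ Finset.range a, G (u * (j:ℕ)) := by
        refine Finset.sum_congr rfl fun j _ => ?_
        rw [key' (b*j)]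
        congr 1
        push_cast [hu]
        ring
    _ = ∑ z : ZMod a, G (u * z) := sum_zmod a (fun z => G (u * z))
    _ = ∑ z : ZMod a, G z := Fintype.sum_bijective _ (Units.mulLeft_bijective u) _ _ (fun z => rfl)
    _ = ∑ j ∈ Finset.range a, beta ((t + j) / a) := by
        rw [← sum_zmod a G]
        refine Finset.sum_congr rfl fun j _ => ?_
        exact (key' j).symm

lemma beta_distrib (a : ℕ) (ha : 0 < a) (t : ℝ) :
    ∑ j ∈ Finset.range a, beta ((t + j) / a) = beta t := by
  have h1 : ∑ j ∈ Finset.range a, beta ((Int.fract t + j) / a) = ∑ j ∈ Finset.range a, beta ((t + j) / a) := by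
    have := sum_beta_shift a ha (Int.fract t) ⌊t⌋
    rw [← this]
    refine Finset.sum_congr rfl fun j _ => ?_
    congr 2
    rw [Int.fract]
    push_cast
    ring
  rw [← h1]
  have h2 : ∀ j ∈ Finset.range a, beta ((Int.fract t + j) / a) = (Int.fract t + j) / a - 1/2 := by
    intro j hj
    have hj2 : j + 1 ≤ a := Finset.mem_range.mp hj
    have hj' : (j : ℝ) + 1 ≤ a := by exact_mod_cast hj2
    have h0 : (0:ℝ) ≤ (Int.fract t + j) / a := by
      have := Int.fract_nonneg t
      positivity
    have h1' : (Int.fract t + j) / a < 1 := by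
      rw [div_lt_one (by exact_mod_cast ha)]
      have := Int.fract_lt_one t
      linarith
    rw [beta_eq, Int.fract_eq_self.mpr ⟨h0, h1'⟩]
  rw [Finset.sum_congr rfl h2]
  have ha' : (a:ℝ) ≠ 0 := by positivity
  rw [Finset.sum_sub_distrib, ← Finset.sum_div, Finset.sum_add_distrib, Finset.sum_const]
  rw [beta_eq, Int.fract]
  push_cast
  rw [sum_range_real]
  field_simp
  simp only [Finset.card_range, Finset.sum_const, nsmul_eq_mul]
  ring

lemma betaII (f g : ℝ → ℝ) (hf : Measurable f) (hg : Measurable g) (c d : ℝ) :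
    IntervalIntegrable (fun t => beta (f t) * beta (g t)) volume c d := by
  rw [intervalIntegrable_iff]
  haveI : IsFiniteMeasure (volume.restrict (Set.uIoc c d)) :=
    ⟨by rw [Measure.restrict_apply_univ, Set.uIoc]; exact measure_Ioc_lt_top⟩
  apply MeasureTheory.Integrable.mono' (g := fun _ => (1:ℝ)) (MeasureTheory.integrable_const 1)
  · exact ((measurable_beta.comp hf).mul (measurable_beta.comp hg)).aestronglyMeasurable
  · filter_upwards with t
    rw [norm_mul]
    calc ‖beta (f t)‖ * ‖beta (g t)‖ ≤ 1 * 1 :=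
          mul_le_mul (abs_beta_le _) (abs_beta_le _) (abs_nonneg _) zero_le_one
      _ = 1 := one_mul 1

lemma beta_sq : ∫ t in (0:ℝ)..1, beta t * beta t = 1/12 := by
  have h : ∀ t ∈ Set.uIcc (0:ℝ) 1, beta t * beta t = (t - 1/2)^2 := by
    intro t ht
    rw [Set.uIcc_of_le (by norm_num)] at ht
    rcases eq_or_lt_of_le ht.2 with h1 | h1
    · subst h1; norm_num [beta]
    · have : ⌊t⌋ = 0 := Int.floor_eq_zero_iff.mpr ⟨ht.1, h1⟩
      rw [beta, this]; push_cast; ring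
  rw [intervalIntegral.integral_congr h]
  have := intervalIntegral.integral_comp_sub_right (a := (0:ℝ)) (b := 1) (fun u => u^2) (1/2)
  rw [this, integral_pow]
  norm_num

lemma split_integral (F : ℝ → ℝ) (hF : ∀ c d : ℝ, IntervalIntegrable F volume c d) (a : ℕ) :
    ∫ u in (0:ℝ)..(a:ℝ), F u = ∑ j ∈ Finset.range a, ∫ u in (0:ℝ)..1, F (u + j) := by
  have h1 : ∑ j ∈ Finset.range a, ∫ u in ((j:ℕ):ℝ)..((j+1:ℕ):ℝ), F u = ∫ u in ((0:ℕ):ℝ)..((a:ℕ):ℝ), F u := by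
    apply intervalIntegral.sum_integral_adjacent_intervals
    intro k _
    exact hF _ _
  push_cast at h1
  rw [← h1]
  refine Finset.sum_congr rfl fun j _ => ?_
  rw [intervalIntegral.integral_comp_add_right (fun u => F u) (j:ℝ)]
  norm_num [add_comm]

lemma key_step (a b : ℕ) (ha : 0 < a) (hco : Nat.Coprime b a) :
    ∫ t in (0:ℝ)..1, beta (a*t) * beta (b*t) = (1/a) * ∫ u in (0:ℝ)..1, beta u * beta (b*u) := by
  have ha' : (a:ℝ) ≠ 0 := by positivity
  set F : ℝ → ℝ := fun u => beta u * beta ((b:ℝ) * u / a) with hFdef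
  have hFint : ∀ c d : ℝ, IntervalIntegrable F volume c d := by
    intro c d
    exact betaII _ _ measurable_id (by fun_prop) c d
  have h0 : ∀ t : ℝ, F ((a:ℝ)*t) = beta ((a:ℝ)*t) * beta ((b:ℝ)*t) := by
    intro t
    simp only [hFdef]
    congr 2
    field_simp
  have h1 : ∫ t in (0:ℝ)..1, beta ((a:ℝ)*t) * beta ((b:ℝ)*t) = ∫ t in (0:ℝ)..1, F ((a:ℝ)*t) := by
    refine intervalIntegral.integral_congr fun t _ => (h0 t).symm
  rw [h1, intervalIntegral.integral_comp_mul_left F ha']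
  rw [mul_zero, mul_one, split_integral F hFint a]
  have h2 : ∀ (j : ℕ) (u : ℝ), F (u + j) = beta u * beta (((b:ℝ)*u + ((b*j:ℕ):ℝ)) / a) := by
    intro j u
    rw [hFdef]
    simp only
    rw [beta_add_nat]
    congr 2
    push_cast
    field_simp
  have h3 : ∑ j ∈ Finset.range a, ∫ u in (0:ℝ)..1, F (u + j)
      = ∫ u in (0:ℝ)..1, ∑ j ∈ Finset.range a, beta u * beta (((b:ℝ)*u + ((b*j:ℕ):ℝ)) / a) := by
    calc ∑ j ∈ Finset.range a, ∫ u in (0:ℝ)..1, F (u + j)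
        = ∑ j ∈ Finset.range a, ∫ u in (0:ℝ)..1, beta u * beta (((b:ℝ)*u + ((b*j:ℕ):ℝ)) / a) :=
          Finset.sum_congr rfl fun j _ => intervalIntegral.integral_congr fun u _ => h2 j u
      _ = ∫ u in (0:ℝ)..1, ∑ j ∈ Finset.range a, beta u * beta (((b:ℝ)*u + ((b*j:ℕ):ℝ)) / a) :=
          (intervalIntegral.integral_finset_sum (fun j _ => betaII _ _ measurable_id (by fun_prop) 0 1)).symm
  rw [h3]
  have h4 : ∀ u : ℝ, ∑ j ∈ Finset.range a, beta u * beta (((b:ℝ)*u + ((b*j:ℕ):ℝ)) / a)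
      = beta u * beta ((b:ℝ)*u) := by
    intro u
    rw [← Finset.mul_sum]
    congr 1
    calc ∑ j ∈ Finset.range a, beta (((b:ℝ)*u + ((b*j:ℕ):ℝ)) / a)
        = ∑ j ∈ Finset.range a, beta (((b:ℝ)*u + (j:ℝ)) / a) := sum_beta_mul a b ha hco ((b:ℝ)*u)
      _ = beta ((b:ℝ)*u) := beta_distrib a ha _
  rw [intervalIntegral.integral_congr (fun u _ => h4 u)]
  rw [smul_eq_mul, one_div]

lemma J_one (b : ℕ) (hb : 0 < b) : ∫ u in (0:ℝ)..1, beta u * beta ((b:ℝ)*u) = 1/(12*b) := by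
  have h := key_step b 1 hb (Nat.coprime_one_left b)
  have e1 : ∫ t in (0:ℝ)..1, beta ((b:ℝ)*t) * beta ((1:ℕ)*t)
      = ∫ u in (0:ℝ)..1, beta u * beta ((b:ℝ)*u) := by
    refine intervalIntegral.integral_congr fun t _ => ?_
    push_cast
    rw [one_mul, mul_comm]
  have e2 : ∫ u in (0:ℝ)..1, beta u * beta (((1:ℕ):ℝ)*u) = 1/12 := by
    have : ∀ u : ℝ, beta u * beta (((1:ℕ):ℝ)*u) = beta u * beta u := by
      intro u; push_cast; rw [one_mul]
    rw [intervalIntegral.integral_congr fun u _ => this u, beta_sq]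
  rw [e1] at h
  rw [h, e2]
  have hb' : (b:ℝ) ≠ 0 := by positivity
  field_simp

lemma J_coprime (a b : ℕ) (ha : 0 < a) (hb : 0 < b) (hco : Nat.Coprime a b) :
    ∫ t in (0:ℝ)..1, beta ((a:ℝ)*t) * beta ((b:ℝ)*t) = 1/(12*a*b) := by
  rw [key_step a b ha hco.symm, J_one b hb]
  have ha' : (a:ℝ) ≠ 0 := by positivity
  have hb' : (b:ℝ) ≠ 0 := by positivity
  field_simp

lemma J_rescale (g a b : ℕ) (hg : 0 < g) :
    ∫ t in (0:ℝ)..1, beta (((g*a:ℕ):ℝ)*t) * beta (((g*b:ℕ):ℝ)*t)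
    = ∫ t in (0:ℝ)..1, beta ((a:ℝ)*t) * beta ((b:ℝ)*t) := by
  have hg' : (g:ℝ) ≠ 0 := by positivity
  set H : ℝ → ℝ := fun u => beta ((a:ℝ)*u) * beta ((b:ℝ)*u) with hHdef
  have hHint : ∀ c d : ℝ, IntervalIntegrable H volume c d :=
    fun c d => betaII _ _ (by fun_prop) (by fun_prop) c d
  have h0 : ∀ t : ℝ, beta (((g*a:ℕ):ℝ)*t) * beta (((g*b:ℕ):ℝ)*t) = H ((g:ℝ)*t) := by
    intro t
    rw [hHdef]
    simp only
    push_cast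
    ring_nf
  rw [intervalIntegral.integral_congr (fun t _ => h0 t),
    intervalIntegral.integral_comp_mul_left H hg', mul_zero, mul_one,
    split_integral H hHint g]
  have h1 : ∀ j : ℕ, ∀ u : ℝ, H (u + j) = H u := by
    intro j u
    rw [hHdef]
    simp only
    rw [show (a:ℝ)*(u + j) = (a:ℝ)*u + ((a*j:ℕ):ℝ) by push_cast; ring,
      show (b:ℝ)*(u + j) = (b:ℝ)*u + ((b*j:ℕ):ℝ) by push_cast; ring,
      beta_add_nat, beta_add_nat]
  have h2 : ∑ j ∈ Finset.range g, ∫ u in (0:ℝ)..1, H (u + j) = g * ∫ u in (0:ℝ)..1, H u := by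
    rw [Finset.sum_congr rfl fun j _ =>
      intervalIntegral.integral_congr (fun u _ => h1 j u), Finset.sum_const, Finset.card_range,
      nsmul_eq_mul]
  rw [h2, smul_eq_mul]
  field_simp

lemma J_formula (k l : ℕ) (hk : 0 < k) (hl : 0 < l) :
    ∫ t in (0:ℝ)..1, beta ((k:ℝ)*t) * beta ((l:ℝ)*t) = (Nat.gcd k l : ℝ)^2/(12*k*l) := by
  set g := Nat.gcd k l with hgdef
  have hg : 0 < g := Nat.gcd_pos_of_pos_left l hk
  set a := k / g with hadef
  set b := l / g with hbdef
  have hka : k = g * a := (Nat.mul_div_cancel' (Nat.gcd_dvd_left k l)).symm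
  have hlb : l = g * b := (Nat.mul_div_cancel' (Nat.gcd_dvd_right k l)).symm
  have ha : 0 < a := Nat.div_pos (Nat.le_of_dvd hk (Nat.gcd_dvd_left k l)) hg
  have hb : 0 < b := Nat.div_pos (Nat.le_of_dvd hl (Nat.gcd_dvd_right k l)) hg
  have hco : Nat.Coprime a b := Nat.coprime_div_gcd_div_gcd hg
  rw [show ((k:ℝ)) = (((g*a:ℕ)):ℝ) by rw [← hka], show ((l:ℝ)) = (((g*b:ℕ)):ℝ) by rw [← hlb]]
  rw [J_rescale g a b hg, J_coprime a b ha hb hco]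
  have hg' : (g:ℝ) ≠ 0 := by positivity
  have ha' : (a:ℝ) ≠ 0 := by positivity
  have hb' : (b:ℝ) ≠ 0 := by positivity
  push_cast
  field_simp

lemma quarter_step (i : ℕ) :
    (1:ℝ)/(i+1) ≤ 4*(Real.sqrt (Real.sqrt (i+1)) - Real.sqrt (Real.sqrt i)) := by
  set u := Real.sqrt (Real.sqrt ((i:ℝ)+1)) with hu
  set v := Real.sqrt (Real.sqrt (i:ℝ)) with hv
  have hi0 : (0:ℝ) ≤ i := by positivity
  have hu1 : 1 ≤ u := by
    rw [hu, Real.one_le_sqrt, Real.one_le_sqrt]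
    linarith
  have hv0 : 0 ≤ v := Real.sqrt_nonneg _
  have hvu : v ≤ u := Real.sqrt_le_sqrt (Real.sqrt_le_sqrt (by linarith))
  have hu2 : u^2 = Real.sqrt ((i:ℝ)+1) := Real.sq_sqrt (Real.sqrt_nonneg _)
  have hv2 : v^2 = Real.sqrt (i:ℝ) := Real.sq_sqrt (Real.sqrt_nonneg _)
  have hu4 : u^4 = (i:ℝ)+1 := by
    rw [show u^4 = (u^2)^2 by ring, hu2, Real.sq_sqrt (by linarith)]
  have hv4 : v^4 = (i:ℝ) := by
    rw [show v^4 = (v^2)^2 by ring, hv2, Real.sq_sqrt hi0]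
  have hkey : (u - v) * ((u+v)*(u^2+v^2)) = 1 := by
    have : (u - v) * ((u+v)*(u^2+v^2)) = u^4 - v^4 := by ring
    rw [this, hu4, hv4]; ring
  have hP : (u+v)*(u^2+v^2) ≤ 4*((i:ℝ)+1) := by
    have h1 : u + v ≤ 2*u := by linarith
    have h2 : u^2 + v^2 ≤ 2*u^2 := by nlinarith
    have h3 : u^2 ≤ u^3 := by nlinarith
    calc (u+v)*(u^2+v^2) ≤ (2*u)*(2*u^2) := by
          apply mul_le_mul h1 h2 (by positivity) (by positivity)
      _ = 4*u^3 := by ring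
      _ ≤ 4*u^4 := by nlinarith
      _ = 4*((i:ℝ)+1) := by rw [hu4]
  rw [div_le_iff₀ (by positivity)]
  nlinarith [mul_le_mul_of_nonneg_left hP (by linarith : (0:ℝ) ≤ u - v)]

lemma harmonic_le (M : ℕ) :
    ∑ a ∈ Finset.Icc 1 M, (1:ℝ)/a ≤ 4*Real.sqrt (Real.sqrt M) := by
  rw [← Finset.Ico_add_one_right_eq_Icc, Finset.sum_Ico_eq_sum_range]
  have h1 : ∀ i ∈ Finset.range (M + 1 - 1), (1:ℝ)/((1+i:ℕ):ℝ)
      ≤ 4*(Real.sqrt (Real.sqrt ((i:ℝ)+1)) - Real.sqrt (Real.sqrt (i:ℝ))) := by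
    intro i _
    have := quarter_step i
    convert this using 3
    push_cast; ring
  calc ∑ i ∈ Finset.range (M + 1 - 1), (1:ℝ)/((1+i:ℕ):ℝ)
      ≤ ∑ i ∈ Finset.range (M + 1 - 1), 4*(Real.sqrt (Real.sqrt ((i:ℝ)+1)) - Real.sqrt (Real.sqrt (i:ℝ))) :=
        Finset.sum_le_sum h1
    _ = 4*∑ i ∈ Finset.range (M + 1 - 1), (Real.sqrt (Real.sqrt (((i+1:ℕ)):ℝ)) - Real.sqrt (Real.sqrt ((i:ℕ):ℝ))) := by
        rw [← Finset.mul_sum]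
        congr 1
        refine Finset.sum_congr rfl fun i _ => ?_
        push_cast; ring_nf
    _ = 4*(Real.sqrt (Real.sqrt ((M + 1 - 1 : ℕ):ℝ)) - Real.sqrt (Real.sqrt ((0:ℕ):ℝ))) := by
        rw [Finset.sum_range_sub (f := fun i : ℕ => Real.sqrt (Real.sqrt ((i:ℕ):ℝ)))]
    _ ≤ 4*Real.sqrt (Real.sqrt M) := by
        simp only [Nat.add_sub_cancel, Nat.cast_zero, Real.sqrt_zero, sub_zero]
        exact le_refl _

lemma sqrt_step (i : ℕ) :
    (1:ℝ)/Real.sqrt ((i:ℝ)+1) ≤ 2*(Real.sqrt ((i:ℝ)+1) - Real.sqrt (i:ℝ)) := by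
  set u := Real.sqrt ((i:ℝ)+1) with hu
  set v := Real.sqrt (i:ℝ) with hv
  have hi0 : (0:ℝ) ≤ i := by positivity
  have hu1 : 1 ≤ u := by
    rw [hu, Real.one_le_sqrt]
    linarith
  have hv0 : 0 ≤ v := Real.sqrt_nonneg _
  have hvu : v ≤ u := Real.sqrt_le_sqrt (by linarith)
  have hu2 : u^2 = (i:ℝ)+1 := Real.sq_sqrt (by linarith)
  have hv2 : v^2 = (i:ℝ) := Real.sq_sqrt hi0
  have hkey : (u - v) * (u+v) = 1 := by nlinarith
  rw [div_le_iff₀ (by positivity)]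
  nlinarith [mul_le_mul_of_nonneg_left (show u + v ≤ 2*u by linarith) (by linarith : (0:ℝ) ≤ u - v)]

lemma sum_invsqrt (N : ℕ) :
    ∑ d ∈ Finset.Icc 1 N, (1:ℝ)/Real.sqrt d ≤ 2*Real.sqrt N := by
  rw [← Finset.Ico_add_one_right_eq_Icc, Finset.sum_Ico_eq_sum_range]
  calc ∑ i ∈ Finset.range (N + 1 - 1), (1:ℝ)/Real.sqrt ((1+i:ℕ):ℝ)
      ≤ ∑ i ∈ Finset.range (N + 1 - 1), 2*(Real.sqrt (((i+1:ℕ)):ℝ) - Real.sqrt ((i:ℕ):ℝ)) := by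
        refine Finset.sum_le_sum fun i _ => ?_
        have := sqrt_step i
        convert this using 3
        · rfl
        · push_cast; ring
        · push_cast; rfl
    _ = 2*∑ i ∈ Finset.range (N + 1 - 1), (Real.sqrt (((i+1:ℕ)):ℝ) - Real.sqrt ((i:ℕ):ℝ)) := by
        rw [← Finset.mul_sum]
    _ = 2*(Real.sqrt ((N + 1 - 1 : ℕ):ℝ) - Real.sqrt ((0:ℕ):ℝ)) := by
        rw [Finset.sum_range_sub (f := fun i : ℕ => Real.sqrt ((i:ℕ):ℝ))]
    _ ≤ 2*Real.sqrt N := by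
        simp only [Nat.add_sub_cancel, Nat.cast_zero, Real.sqrt_zero, sub_zero]
        exact le_refl _

lemma divisor_inner_sum (N d : ℕ) (hd : 0 < d) :
    ∑ k ∈ Finset.Icc 1 N, (if d ∣ k then (d:ℝ)/k else 0) = ∑ a ∈ Finset.Icc 1 (N/d), (1:ℝ)/a := by
  rw [← Finset.sum_filter]
  apply Finset.sum_nbij' (i := fun k => k / d) (j := fun a => d * a)
  · intro k hk
    simp only [Finset.mem_filter, Finset.mem_Icc] at hk
    obtain ⟨⟨hk1, hk2⟩, hdk⟩ := hk
    simp only [Finset.mem_Icc]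
    constructor
    · exact Nat.one_le_div_iff hd |>.mpr (Nat.le_of_dvd hk1 hdk)
    · exact Nat.div_le_div_right hk2
  · intro a ha
    simp only [Finset.mem_Icc] at ha
    obtain ⟨ha1, ha2⟩ := ha
    simp only [Finset.mem_filter, Finset.mem_Icc]
    refine ⟨⟨Nat.mul_pos hd ha1, ?_⟩, Dvd.intro a rfl⟩
    calc d * a ≤ d * (N / d) := Nat.mul_le_mul_left d ha2
      _ = (N / d) * d := mul_comm _ _
      _ ≤ N := Nat.div_mul_le_self N d
  · intro k hk
    simp only [Finset.mem_filter] at hk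
    exact Nat.mul_div_cancel' hk.2
  · intro a ha
    exact Nat.mul_div_cancel_left a hd
  · intro k hk
    simp only [Finset.mem_filter, Finset.mem_Icc] at hk
    obtain ⟨⟨hk1, hk2⟩, hdk⟩ := hk
    obtain ⟨c, hc⟩ := hdk
    subst hc
    rw [Nat.mul_div_cancel_left c hd]
    have hc0 : 0 < c := Nat.pos_of_ne_zero (fun h => by simp [h] at hk1)
    have : (d:ℝ) ≠ 0 := by positivity
    have : (c:ℝ) ≠ 0 := by
      have : (0:ℕ) < c := hc0
      positivity
    push_cast
    field_simp

lemma gcd_sq_le (N k l : ℕ) (hk : k ∈ Finset.Icc 1 N) (hl : l ∈ Finset.Icc 1 N) :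
    ((Nat.gcd k l : ℝ))^2 ≤ ∑ d ∈ Finset.Icc 1 N, (if d ∣ k ∧ d ∣ l then (d:ℝ)^2 else 0) := by
  simp only [Finset.mem_Icc] at hk hl
  have hg : Nat.gcd k l ∈ Finset.Icc 1 N := by
    simp only [Finset.mem_Icc]
    exact ⟨Nat.gcd_pos_of_pos_left l hk.1, le_trans (Nat.le_of_dvd hk.1 (Nat.gcd_dvd_left k l)) hk.2⟩
  have := Finset.single_le_sum (f := fun d => if d ∣ k ∧ d ∣ l then (d:ℝ)^2 else 0)
    (fun d _ => by positivity) hg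
  simpa [Nat.gcd_dvd_left, Nat.gcd_dvd_right] using this

lemma T_bound (N : ℕ) :
    ∑ k ∈ Finset.Icc 1 N, ∑ l ∈ Finset.Icc 1 N, (Nat.gcd k l : ℝ)^2/((k:ℝ)*l) ≤ 32*N := by
  have hstep1 : ∑ k ∈ Finset.Icc 1 N, ∑ l ∈ Finset.Icc 1 N, (Nat.gcd k l : ℝ)^2/((k:ℝ)*l)
      ≤ ∑ k ∈ Finset.Icc 1 N, ∑ l ∈ Finset.Icc 1 N,
          ∑ d ∈ Finset.Icc 1 N, (if d ∣ k then (d:ℝ)/k else 0) * (if d ∣ l then (d:ℝ)/l else 0) := by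
    refine Finset.sum_le_sum fun k hk => Finset.sum_le_sum fun l hl => ?_
    have hk1 : 1 ≤ k := (Finset.mem_Icc.mp hk).1
    have hl1 : 1 ≤ l := (Finset.mem_Icc.mp hl).1
    have hk0 : (0:ℝ) < k := by exact_mod_cast hk1
    have hl0 : (0:ℝ) < l := by exact_mod_cast hl1
    have e : ∑ d ∈ Finset.Icc 1 N, (if d ∣ k then (d:ℝ)/k else 0) * (if d ∣ l then (d:ℝ)/l else 0)
        = (∑ d ∈ Finset.Icc 1 N, (if d ∣ k ∧ d ∣ l then (d:ℝ)^2 else 0))/((k:ℝ)*l) := by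
      rw [Finset.sum_div]
      refine Finset.sum_congr rfl fun d _ => ?_
      by_cases h1 : d ∣ k <;> by_cases h2 : d ∣ l <;> simp [h1, h2]
      field_simp
    rw [e, div_le_div_iff₀ (by positivity) (by positivity)]
    have := gcd_sq_le N k l hk hl
    nlinarith [mul_pos hk0 hl0]
  refine le_trans hstep1 ?_
  have hstep2 : ∑ k ∈ Finset.Icc 1 N, ∑ l ∈ Finset.Icc 1 N,
          ∑ d ∈ Finset.Icc 1 N, (if d ∣ k then (d:ℝ)/k else 0) * (if d ∣ l then (d:ℝ)/l else 0)
      = ∑ d ∈ Finset.Icc 1 N, (∑ k ∈ Finset.Icc 1 N, (if d ∣ k then (d:ℝ)/k else 0))^2 := by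
    have e1 : ∀ k, ∑ l ∈ Finset.Icc 1 N,
          ∑ d ∈ Finset.Icc 1 N, (if d ∣ k then (d:ℝ)/k else 0) * (if d ∣ l then (d:ℝ)/l else 0)
        = ∑ d ∈ Finset.Icc 1 N, (if d ∣ k then (d:ℝ)/k else 0)
            * (∑ l ∈ Finset.Icc 1 N, (if d ∣ l then (d:ℝ)/l else 0)) := by
      intro k
      rw [Finset.sum_comm]
      exact Finset.sum_congr rfl fun d _ => by rw [← Finset.mul_sum]
    rw [Finset.sum_congr rfl fun k _ => e1 k, Finset.sum_comm]
    refine Finset.sum_congr rfl fun d _ => ?_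
    rw [← Finset.sum_mul, sq]
  rw [hstep2]
  have hstep3 : ∑ d ∈ Finset.Icc 1 N, (∑ k ∈ Finset.Icc 1 N, (if d ∣ k then (d:ℝ)/k else 0))^2
      ≤ ∑ d ∈ Finset.Icc 1 N, 16 * Real.sqrt N * (1/Real.sqrt d) := by
    refine Finset.sum_le_sum fun d hd => ?_
    have hd1 : 1 ≤ d := (Finset.mem_Icc.mp hd).1
    have hd0 : (0:ℝ) < d := by exact_mod_cast hd1
    rw [divisor_inner_sum N d hd1]
    have h1 : ∑ a ∈ Finset.Icc 1 (N/d), (1:ℝ)/a ≤ 4*Real.sqrt (Real.sqrt ((N/d : ℕ):ℝ)) :=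
      harmonic_le (N/d)
    have h0 : (0:ℝ) ≤ ∑ a ∈ Finset.Icc 1 (N/d), (1:ℝ)/a :=
      Finset.sum_nonneg fun a _ => by positivity
    have h2 : (∑ a ∈ Finset.Icc 1 (N/d), (1:ℝ)/a)^2 ≤ (4*Real.sqrt (Real.sqrt ((N/d : ℕ):ℝ)))^2 := by
      apply pow_le_pow_left₀ h0 h1
    refine le_trans h2 ?_
    have h3 : (4*Real.sqrt (Real.sqrt ((N/d : ℕ):ℝ)))^2 = 16 * Real.sqrt ((N/d : ℕ):ℝ) := by
      rw [mul_pow, Real.sq_sqrt (Real.sqrt_nonneg _)]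
      norm_num
    rw [h3]
    have h4 : Real.sqrt ((N/d : ℕ):ℝ) ≤ Real.sqrt ((N:ℝ)/(d:ℝ)) :=
      Real.sqrt_le_sqrt (Nat.cast_div_le)
    have h5 : Real.sqrt ((N:ℝ)/(d:ℝ)) = Real.sqrt N * (1/Real.sqrt d) := by
      rw [Real.sqrt_div (by positivity : (0:ℝ) ≤ (N:ℝ))]
      ring
    calc 16 * Real.sqrt ((N/d : ℕ):ℝ) ≤ 16 * (Real.sqrt N * (1/Real.sqrt d)) := by
          rw [← h5]; linarith
      _ = 16 * Real.sqrt N * (1/Real.sqrt d) := by ring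
  refine le_trans hstep3 ?_
  rw [← Finset.mul_sum]
  calc 16 * Real.sqrt N * ∑ d ∈ Finset.Icc 1 N, (1/Real.sqrt d)
      ≤ 16 * Real.sqrt N * (2*Real.sqrt N) := by
        have := sum_invsqrt N
        have h6 : (0:ℝ) ≤ 16 * Real.sqrt N := by positivity
        exact mul_le_mul_of_nonneg_left this h6
    _ = 32 * (Real.sqrt N * Real.sqrt N) := by ring
    _ = 32 * N := by rw [Real.mul_self_sqrt (by positivity)]

lemma betaSumII (k : ℕ) (s : Finset ℕ) (c d : ℝ) :
    IntervalIntegrable (fun t => ∑ l ∈ s, beta ((k:ℝ)*t) * beta ((l:ℝ)*t)) volume c d := by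
  rw [intervalIntegrable_iff]
  haveI : IsFiniteMeasure (volume.restrict (Set.uIoc c d)) :=
    ⟨by rw [Measure.restrict_apply_univ, Set.uIoc]; exact measure_Ioc_lt_top⟩
  apply MeasureTheory.Integrable.mono' (g := fun _ => (s.card:ℝ)) (MeasureTheory.integrable_const _)
  · exact (Finset.measurable_sum s (fun l _ =>
      (measurable_beta.comp (by fun_prop)).mul (measurable_beta.comp (by fun_prop)))).aestronglyMeasurable
  · filter_upwards with t
    calc ‖∑ l ∈ s, beta ((k:ℝ)*t) * beta ((l:ℝ)*t)‖
        ≤ ∑ l ∈ s, ‖beta ((k:ℝ)*t) * beta ((l:ℝ)*t)‖ := norm_sum_le _ _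
      _ ≤ ∑ l ∈ s, 1 := Finset.sum_le_sum fun l _ => by
          rw [norm_mul]
          calc ‖beta ((k:ℝ)*t)‖ * ‖beta ((l:ℝ)*t)‖ ≤ 1 * 1 :=
                mul_le_mul (abs_beta_le _) (abs_beta_le _) (abs_nonneg _) zero_le_one
            _ = 1 := one_mul 1
      _ = (s.card:ℝ) := by rw [Finset.sum_const, nsmul_eq_mul, mul_one]

noncomputable def B (x : ℝ) (t : ℝ) : ℝ :=
  (1/x) * ∑ k ∈ Finset.Icc 1 ⌊x⌋₊, beta (k * t)

set_option maxHeartbeats 1000000 in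
theorem stmt_2 :
    ∃ C : ℝ, 0 < C ∧ ∀ x : ℝ, 1 ≤ x →
      (∫ t in (0:ℝ)..1, (B x t)^2) ^ ((1:ℝ)/2) ≤ C / Real.sqrt x := by
  refine ⟨2, by norm_num, fun x hx => ?_⟩
  have hx0 : (0:ℝ) < x := by linarith
  set N := ⌊x⌋₊ with hN
  have hNx : (N:ℝ) ≤ x := Nat.floor_le (by linarith)
  have hxN : x ≤ N + 1 := (Nat.lt_floor_add_one x).le
  have hN1 : 1 ≤ N := Nat.le_floor (by exact_mod_cast hx)
  -- expand the square
  have hBsq : ∀ t : ℝ, (B x t)^2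
      = (1/x^2) * ∑ k ∈ Finset.Icc 1 N, ∑ l ∈ Finset.Icc 1 N, beta ((k:ℝ)*t) * beta ((l:ℝ)*t) := by
    intro t
    rw [B, mul_pow, ← hN, pow_two (∑ k ∈ Finset.Icc 1 N, beta ((k:ℝ) * t)), Finset.sum_mul_sum]
    congr 1
    · field_simp
  have hInt : ∫ t in (0:ℝ)..1, (B x t)^2
      = (1/x^2) * ∑ k ∈ Finset.Icc 1 N, ∑ l ∈ Finset.Icc 1 N,
          ∫ t in (0:ℝ)..1, beta ((k:ℝ)*t) * beta ((l:ℝ)*t) := by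
    rw [intervalIntegral.integral_congr (fun t _ => hBsq t),
      intervalIntegral.integral_const_mul]
    congr 1
    have e2 : ∫ t in (0:ℝ)..1, ∑ k ∈ Finset.Icc 1 N, ∑ l ∈ Finset.Icc 1 N, beta ((k:ℝ)*t) * beta ((l:ℝ)*t)
        = ∑ k ∈ Finset.Icc 1 N, ∫ t in (0:ℝ)..1, ∑ l ∈ Finset.Icc 1 N, beta ((k:ℝ)*t) * beta ((l:ℝ)*t) :=
      intervalIntegral.integral_finset_sum (fun k _ => betaSumII k (Finset.Icc 1 N) 0 1)
    rw [e2]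
    exact Finset.sum_congr rfl fun k _ =>
      intervalIntegral.integral_finset_sum (fun l _ =>
        betaII (fun t => (k:ℝ)*t) (fun t => (l:ℝ)*t) (by fun_prop) (by fun_prop) 0 1)
  have hJ : ∑ k ∈ Finset.Icc 1 N, ∑ l ∈ Finset.Icc 1 N,
        (∫ t in (0:ℝ)..1, beta ((k:ℝ)*t) * beta ((l:ℝ)*t))
      = ∑ k ∈ Finset.Icc 1 N, ∑ l ∈ Finset.Icc 1 N, (Nat.gcd k l : ℝ)^2/(12*((k:ℝ)*l)) := by
    refine Finset.sum_congr rfl fun k hk => Finset.sum_congr rfl fun l hl => ?_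
    have hk1 : 1 ≤ k := (Finset.mem_Icc.mp hk).1
    have hl1 : 1 ≤ l := (Finset.mem_Icc.mp hl).1
    rw [J_formula k l hk1 hl1]
    ring_nf
  have hT : ∑ k ∈ Finset.Icc 1 N, ∑ l ∈ Finset.Icc 1 N, (Nat.gcd k l : ℝ)^2/(12*((k:ℝ)*l))
      ≤ (32/12) * (N:ℝ) := by
    have e : ∀ k l : ℕ, (Nat.gcd k l : ℝ)^2/(12*((k:ℝ)*l)) = (1/12) * ((Nat.gcd k l : ℝ)^2/((k:ℝ)*l)) := by
      intro k l; ring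
    calc ∑ k ∈ Finset.Icc 1 N, ∑ l ∈ Finset.Icc 1 N, (Nat.gcd k l : ℝ)^2/(12*((k:ℝ)*l))
        = (1/12) * ∑ k ∈ Finset.Icc 1 N, ∑ l ∈ Finset.Icc 1 N, (Nat.gcd k l : ℝ)^2/((k:ℝ)*l) := by
          rw [Finset.mul_sum]
          refine Finset.sum_congr rfl fun k _ => ?_
          rw [Finset.mul_sum]
          exact Finset.sum_congr rfl fun l _ => e k l
      _ ≤ (1/12) * (32*(N:ℝ)) := by
          have := T_bound N
          linarith
      _ = (32/12) * (N:ℝ) := by push_cast; ring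
  have hmain : ∫ t in (0:ℝ)..1, (B x t)^2 ≤ 3/x := by
    rw [hInt]
    calc (1/x^2) * ∑ k ∈ Finset.Icc 1 N, ∑ l ∈ Finset.Icc 1 N,
          ∫ t in (0:ℝ)..1, beta ((k:ℝ)*t) * beta ((l:ℝ)*t)
        ≤ (1/x^2) * ((32/12) * (N:ℝ)) := by
          rw [hJ] at *
          have h1 : (0:ℝ) ≤ 1/x^2 := by positivity
          exact mul_le_mul_of_nonneg_left hT h1
      _ ≤ (1/x^2) * (3 * x) := by
          have : (32/12:ℝ) * (N:ℝ) ≤ 3 * x := by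
            calc (32/12:ℝ) * (N:ℝ) ≤ 3 * (N:ℝ) := by nlinarith [Nat.cast_nonneg (α := ℝ) N]
              _ ≤ 3 * x := by linarith
          have h1 : (0:ℝ) ≤ 1/x^2 := by positivity
          exact mul_le_mul_of_nonneg_left this h1
      _ = 3/x := by field_simp
  have h0 : (0:ℝ) ≤ ∫ t in (0:ℝ)..1, (B x t)^2 :=
    intervalIntegral.integral_nonneg (by norm_num) (fun t _ => sq_nonneg _)
  calc (∫ t in (0:ℝ)..1, (B x t)^2) ^ ((1:ℝ)/2)
      ≤ (3/x) ^ ((1:ℝ)/2) := Real.rpow_le_rpow h0 hmain (by norm_num)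
    _ = Real.sqrt (3/x) := (Real.sqrt_eq_rpow _).symm
    _ = Real.sqrt 3 / Real.sqrt x := Real.sqrt_div (by norm_num) x
    _ ≤ 2 / Real.sqrt x := by
        have hsx : (0:ℝ) < Real.sqrt x := Real.sqrt_pos.mpr hx0
        have h3 : Real.sqrt 3 ≤ 2 := by
          rw [show (2:ℝ) = Real.sqrt 4 by
            rw [show (4:ℝ) = 2^2 by norm_num, Real.sqrt_sq (by norm_num)]]
          exact Real.sqrt_le_sqrt (by norm_num)
        gcongr
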